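/- arXiv:2109.06095 — 4 statements merged into one kernel-verified Lean document; each statement's English description precedes it below -/
import Mathlib

section
/- Let (a_k)_{k≥0} be a sequence of nonnegative real numbers with a_0 > 0. If the series ∑_{k=1}^∞ a_k²/a_{k−1} converges (with the convention that terms with a_{k−1} = 0 force a_k = 0), then ∑_{k=1}^∞ a_k converges. -/
/-- If `(a_k)` is a sequence of nonnegative reals with `a₀ > 0`, terms with a zero
predecessor vanish, and `∑ a_k² / a_{k−1}` converges, then `∑ a_k` converges. -/
theorem stmt_7 (a : ℕ → ℝ) (hnonneg : ∀ k, 0 ≤ a k) (h0 : 0 < a 0)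
    (hconv : ∀ k, a k = 0 → a (k + 1) = 0)
    (hsum : Summable (fun k => (a (k + 1)) ^ 2 / a k)) :
    Summable (fun k => a (k + 1)) := by
  set b : ℕ → ℝ := fun k => (a (k + 1)) ^ 2 / a k with hb
  have hbnn : ∀ k, 0 ≤ b k := fun k => div_nonneg (sq_nonneg _) (hnonneg k)
  set B : ℝ := ∑' k, b k with hB
  have hBnn : 0 ≤ B := tsum_nonneg hbnn
  have key : ∀ k, a (k + 1) ≤ a k / 2 + 2 * b k := by
    intro k
    rcases eq_or_lt_of_le (hnonneg k) with h | h
    · rw [hconv k h.symm]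
      positivity
    · rcases le_or_gt (a (k + 1)) (a k / 2) with h1 | h1
      · have : (0:ℝ) ≤ 2 * b k := by positivity
        linarith
      · have h2 : a (k + 1) ≤ 2 * b k := by
          simp only [hb]
          rw [← sub_nonneg]
          have : 2 * ((a (k+1))^2 / a k) - a (k+1)
              = a (k+1) * (2 * a (k+1) - a k) / a k := by
            field_simp
          rw [this]
          apply div_nonneg _ (le_of_lt h)
          have : 0 ≤ a (k+1) := hnonneg _
          nlinarith
        have : (0:ℝ) ≤ a k / 2 := by positivity
        linarith
  apply summable_of_sum_range_le (c := a 0 + 4 * B) (fun n => hnonneg _)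
  intro n
  have hbd : ∀ n, ∑ k ∈ Finset.range n, b k ≤ B :=
    fun n => Summable.sum_le_tsum _ (fun k _ => hbnn k) hsum
  have h1 : ∑ k ∈ Finset.range n, a (k + 1)
      ≤ ∑ k ∈ Finset.range n, (a k / 2 + 2 * b k) :=
    Finset.sum_le_sum (fun k _ => key k)
  have h2 : ∑ k ∈ Finset.range n, a k ≤ a 0 + ∑ k ∈ Finset.range n, a (k + 1) := by
    cases n with
    | zero => simp; positivity
    | succ m =>
        rw [Finset.sum_range_succ' a m]
        have : ∑ k ∈ Finset.range m, a (k + 1) ≤ ∑ k ∈ Finset.range (m+1), a (k+1) := by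
          apply Finset.sum_le_sum_of_subset_of_nonneg
          · exact Finset.range_subset_range.mpr (Nat.le_succ m)
          · intro i _ _; exact hnonneg _
        linarith
  rw [Finset.sum_add_distrib, ← Finset.sum_div, ← Finset.mul_sum] at h1
  have h3 := hbd n
  linarith
end

section
/- Let (z_k)_{k≥0} be a sequence in a metric space (M, dist), let F : M → ℝ be bounded below with F(z_{k+1}) ≤ F(z_k) for all k, and suppose there exist ρ₁, ρ₂ > 0, a point z̄ with F(z_k) > F(z̄) for all k, and a concave C¹ function κ : [0, η) → [0, ∞) with κ(0) = 0 and κ' > 0 on (0, η), such that for all k ≥ 1: (i) F(z_{k−1}) − F(z_k) ≥ ρ₁ dist(z_{k−1}, z_k)², and (ii) if F(z_k) − F(z̄) < η then κ'(F(z_k) − F(z̄)) ≥ 1/(ρ₂ dist(z_{k−1}, z_k)). If additionally F(z_k) − F(z̄) < η for all k ≥ some index l, then dist(z_k, z_{k+1})²/dist(z_{k−1}, z_k) ≤ (ρ₂/ρ₁)[κ(F(z_k) − F(z̄)) − κ(F(z_{k+1}) − F(z̄))] for all k > l, and consequently ∑_{k} dist(z_k, z_{k+1}) < ∞ and (z_k)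 is a Cauchy sequence. -/
/-- Finite-length argument under the Kurdyka–Łojasiewicz property: for a
nonincreasing, bounded-below `F` along a sequence `(z_k)` in a metric space, with a
sufficient decrease property (i) and a KL-type gradient inequality (ii) via a
concave `C¹` desingularizing function `κ`, if eventually `F(z_k) − F(z̄) < η` then
`dist(z_k, z_{k+1})²/dist(z_{k−1}, z_k)` is bounded by the telescoping
`(ρ₂/ρ₁)[κ(F(z_k) − F(z̄)) − κ(F(z_{k+1}) − F(z̄))]`, the series of consecutive
distances converges, and `(z_k)` is Cauchy. -/
theorem stmt_11 {M : Type*} [MetricSpace M] (z : ℕ → M) (F : M → ℝ)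
    (B : ℝ) (hbelow : ∀ m, B ≤ F m)
    (hmono : ∀ k, F (z (k + 1)) ≤ F (z k))
    (ρ₁ ρ₂ : ℝ) (hρ₁ : 0 < ρ₁) (hρ₂ : 0 < ρ₂)
    (zbar : M) (hgt : ∀ k, F zbar < F (z k))
    (η : ℝ) (hη : 0 < η)
    (κ κ' : ℝ → ℝ)
    (hconc : ConcaveOn ℝ (Set.Ico (0:ℝ) η) κ) (hκ0 : κ 0 = 0)
    (hderiv : ∀ t ∈ Set.Ioo (0:ℝ) η, HasDerivAt κ (κ' t) t)
    (hκ'pos : ∀ t ∈ Set.Ioo (0:ℝ) η, 0 < κ' t)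
    (hsuffdec : ∀ k, F (z k) - F (z (k + 1)) ≥ ρ₁ * dist (z k) (z (k + 1)) ^ 2)
    (hKL : ∀ k, 1 ≤ k → F (z k) - F zbar < η →
      κ' (F (z k) - F zbar) ≥ 1 / (ρ₂ * dist (z (k - 1)) (z k)))
    (l : ℕ) (hl : ∀ k, l ≤ k → F (z k) - F zbar < η) :
    (∀ k, l < k →
      dist (z k) (z (k + 1)) ^ 2 / dist (z (k - 1)) (z k) ≤
        (ρ₂ / ρ₁) * (κ (F (z k) - F zbar) - κ (F (z (k + 1)) - F zbar))) ∧
      Summable (fun k => dist (z k) (z (k + 1))) ∧ CauchySeq z := by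
  classical
  obtain ⟨d, hd⟩ : ∃ d : ℕ → ℝ, d = fun k => dist (z k) (z (k + 1)) := ⟨_, rfl⟩
  obtain ⟨e, he⟩ : ∃ e : ℕ → ℝ, e = fun k => F (z k) - F zbar := ⟨_, rfl⟩
  have hdk : ∀ j, dist (z j) (z (j + 1)) = d j := fun j => by rw [hd]
  have hej : ∀ j, F (z j) - F zbar = e j := fun j => by rw [he]
  have hdnn : ∀ k, 0 ≤ d k := fun k => by rw [hd]; exact dist_nonneg
  have he0 : ∀ k, d k = 0 → e k = e (k + 1) := by
    intro k hk
    rw [hd] at hk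
    simp only [dist_eq_zero] at hk
    rw [he]; simp only []; rw [hk]
  have hepos : ∀ k, 0 < e k := fun k => by rw [he]; exact sub_pos.2 (hgt k)
  have hedec : ∀ k, e (k + 1) ≤ e k := fun k => by
    rw [he]; exact sub_le_sub_right (hmono k) _
  have heη : ∀ k, l ≤ k → e k < η := fun k hk => by rw [he]; exact hl k hk
  have hsd : ∀ k, ρ₁ * d k ^ 2 ≤ e k - e (k + 1) := fun k => by
    rw [hd, he]; have := hsuffdec k; simp only []; linarith
  have hKL' : ∀ m, l ≤ m → 1 / (ρ₂ * d m) ≤ κ' (e (m + 1)) := by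
    intro m hm
    have h := hKL (m + 1) (by omega) (hl (m + 1) (by omega))
    simp only [Nat.add_sub_cancel] at h
    rw [hd, he]
    simpa using h
  -- core concavity inequality
  have hconcineq : ∀ a b : ℝ, b ∈ Set.Ico (0:ℝ) η → a ∈ Set.Ioo (0:ℝ) η → b ≤ a →
      κ' a * (a - b) ≤ κ a - κ b := by
    intro a b hb ha hba
    rcases eq_or_lt_of_le hba with rfl | hlt
    · simp
    · have hs := hconc.le_slope_of_hasDerivAt hb ⟨ha.1.le, ha.2⟩ hlt (hderiv a ha)
      rw [slope_def_field] at hs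
      have hpos : 0 < a - b := sub_pos.2 hlt
      calc κ' a * (a - b) ≤ (κ a - κ b) / (a - b) * (a - b) :=
            mul_le_mul_of_nonneg_right hs hpos.le
        _ = κ a - κ b := div_mul_cancel₀ _ hpos.ne'
  set C := ρ₂ / ρ₁ with hC
  have hCpos : 0 < C := div_pos hρ₂ hρ₁
  have hΔnn : ∀ k, l ≤ k → 0 ≤ κ (e k) - κ (e (k + 1)) := by
    intro k hk
    have hek : e k ∈ Set.Ioo (0:ℝ) η := ⟨hepos k, heη k hk⟩
    have h := hconcineq (e k) (e (k + 1)) ⟨(hepos (k + 1)).le, heη (k + 1) (by omega)⟩ hek (hedec k)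
    have h2 := hκ'pos (e k) hek
    nlinarith [hedec k]
  have hκpos : ∀ k, l ≤ k → 0 < κ (e k) := by
    intro k hk
    have hek : e k ∈ Set.Ioo (0:ℝ) η := ⟨hepos k, heη k hk⟩
    have h := hconcineq (e k) 0 ⟨le_refl 0, hη⟩ hek (hepos k).le
    have h2 := hκ'pos (e k) hek
    nlinarith [hepos k, hκ0]
  -- key inequality
  have key : ∀ m k, l ≤ m → l < k → e (m + 1) = e k → d m ≠ 0 →
      d k ^ 2 ≤ C * (κ (e k) - κ (e (k + 1))) * d m := by
    intro m k hlm hlk heq hdm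
    have hdmpos : 0 < d m := (hdnn m).lt_of_ne (Ne.symm hdm)
    have hek : e k ∈ Set.Ioo (0:ℝ) η := ⟨hepos k, heη k hlk.le⟩
    have hΔ := hconcineq (e k) (e (k + 1))
      ⟨(hepos (k + 1)).le, heη (k + 1) (by omega)⟩ hek (hedec k)
    have h1 := hKL' m hlm
    rw [heq] at h1
    have hκ'k : 0 < κ' (e k) := hκ'pos _ hek
    have h2 := hsd k
    have h3 : 1 / (ρ₂ * d m) * (ρ₁ * d k ^ 2) ≤ κ' (e k) * (e k - e (k + 1)) :=
      mul_le_mul h1 h2 (by positivity) hκ'k.le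
    have h4 : 1 / (ρ₂ * d m) * (ρ₁ * d k ^ 2) ≤ κ (e k) - κ (e (k + 1)) := h3.trans hΔ
    have hpos : 0 < ρ₂ * d m := by positivity
    rw [div_mul_eq_mul_div, one_mul, div_le_iff₀ hpos] at h4
    rw [hC, div_mul_eq_mul_div, div_mul_eq_mul_div, le_div_iff₀ hρ₁]
    nlinarith [h4]
  -- sqrt bound
  have hdb : ∀ k, l ≤ k → d k ≤ Real.sqrt (η / ρ₁) := by
    intro k hk
    have h1 := hsd k
    have h2 : d k ^ 2 ≤ η / ρ₁ := by
      rw [le_div_iff₀ hρ₁]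
      nlinarith [hepos (k + 1), heη k hk]
    calc d k = Real.sqrt (d k ^ 2) := (Real.sqrt_sq (hdnn k)).symm
      _ ≤ Real.sqrt (η / ρ₁) := Real.sqrt_le_sqrt h2
  set R := Real.sqrt (η / ρ₁) with hR
  have hRnn : 0 ≤ R := Real.sqrt_nonneg _
  set D := d l + 3 * R with hD
  have hDnn : 0 ≤ D := add_nonneg (hdnn l) (by positivity)
  let g : ℕ → ℝ := fun i => Nat.rec D (fun i gi => if d (l + 1 + i) = 0 then gi else d (l + 1 + i)) i
  have hg0 : g 0 = D := rfl
  have hgs : ∀ i, g (i + 1) = if d (l + 1 + i) = 0 then g i else d (l + 1 + i) := fun i => rfl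
  have hchar : ∀ i, (g i = D ∧ e (l + 1 + i) = e (l + 1)) ∨
      (∃ m, l ≤ m ∧ d m ≠ 0 ∧ g i = d m ∧ e (l + 1 + i) = e (m + 1)) := by
    intro i
    induction i with
    | zero => exact Or.inl ⟨rfl, rfl⟩
    | succ n ih =>
      by_cases h : d (l + 1 + n) = 0
      · have hee : e (l + 1 + (n + 1)) = e (l + 1 + n) := (he0 _ h).symm
        have hgn : g (n + 1) = g n := by rw [hgs n, if_pos h]
        rcases ih with ⟨h1, h2⟩ | ⟨m, hm1, hm2, hm3, hm4⟩
        · exact Or.inl ⟨hgn.trans h1, hee.trans h2⟩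
        · exact Or.inr ⟨m, hm1, hm2, hgn.trans hm3, hee.trans hm4⟩
      · exact Or.inr ⟨l + 1 + n, by omega, h, by rw [hgs n, if_neg h], rfl⟩
  have hgnn : ∀ i, 0 ≤ g i := by
    intro i
    rcases hchar i with ⟨h1, _⟩ | ⟨m, _, _, hm3, _⟩
    · rw [h1]; exact hDnn
    · rw [hm3]; exact hdnn m
  have step : ∀ i, d (l + 1 + i) + g (i + 1) / 2 ≤
      g i / 2 + (9/8) * (C * (κ (e (l + 1 + i)) - κ (e (l + 1 + i + 1)))) := by
    intro i
    have hlk : l < l + 1 + i := by omega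
    have hΔ : 0 ≤ κ (e (l + 1 + i)) - κ (e (l + 1 + i + 1)) := hΔnn _ hlk.le
    have hCΔ : 0 ≤ C * (κ (e (l + 1 + i)) - κ (e (l + 1 + i + 1))) := mul_nonneg hCpos.le hΔ
    by_cases h : d (l + 1 + i) = 0
    · rw [hgs i, if_pos h, h]
      linarith [hgnn i]
    · rw [hgs i, if_neg h]
      rcases hchar i with ⟨h1, h2⟩ | ⟨m, hm1, hm2, hm3, hm4⟩
      · by_cases hdl : d l = 0
        · have hdkb := hdb (l + 1 + i) hlk.le
          rw [h1, hD, hdl]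
          linarith
        · have hq0 := key l (l + 1 + i) le_rfl hlk h2.symm hdl
          have hq : d (l + 1 + i) ^ 2 ≤
              C * (κ (e (l + 1 + i)) - κ (e (l + 1 + i + 1))) * g i := by
            rw [h1, hD]
            nlinarith [mul_nonneg hCΔ hRnn]
          nlinarith [hq, sq_nonneg (g i / 2 - (9/8) * (C * (κ (e (l + 1 + i)) - κ (e (l + 1 + i + 1))))), hdnn (l + 1 + i), hgnn i, hCΔ]
      · have hq : d (l + 1 + i) ^ 2 ≤
            C * (κ (e (l + 1 + i)) - κ (e (l + 1 + i + 1))) * g i := by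
          rw [hm3]
          exact key m (l + 1 + i) hm1 hlk hm4.symm hm2
        nlinarith [hq, sq_nonneg (g i / 2 - (9/8) * (C * (κ (e (l + 1 + i)) - κ (e (l + 1 + i + 1))))), hdnn (l + 1 + i), hgnn i, hCΔ]
  -- telescoping
  set ψ : ℕ → ℝ := fun j => g j / 2 + (9/8) * (C * κ (e (l + 1 + j))) with hψ
  have hstep2 : ∀ i, d (l + 1 + i) ≤ ψ i - ψ (i + 1) := by
    intro i
    have h := step i
    have h2 : ψ i - ψ (i + 1) = g i / 2 - g (i + 1) / 2 +
        ((9/8) * (C * κ (e (l + 1 + i))) - (9/8) * (C * κ (e (l + 1 + (i + 1))))) := by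
      rw [hψ]; ring
    have h3 : e (l + 1 + (i + 1)) = e (l + 1 + i + 1) := rfl
    rw [h2, h3]
    linarith
  have hψnn : ∀ i, 0 ≤ ψ i := by
    intro i
    rw [hψ]
    have := hκpos (l + 1 + i) (by omega)
    have := hgnn i
    positivity
  have hsumtail : ∀ N, ∑ i ∈ Finset.range N, d (l + 1 + i) ≤ ψ 0 := by
    intro N
    calc ∑ i ∈ Finset.range N, d (l + 1 + i) ≤ ∑ i ∈ Finset.range N, (ψ i - ψ (i + 1)) :=
          Finset.sum_le_sum fun i _ => hstep2 i
      _ = ψ 0 - ψ N := Finset.sum_range_sub' ψ N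
      _ ≤ ψ 0 := by linarith [hψnn N]
  have hsums : ∀ n, ∑ k ∈ Finset.range n, d k ≤ (∑ k ∈ Finset.range (l + 1), d k) + ψ 0 := by
    intro n
    rcases le_or_gt n (l + 1) with h | h
    · have h1 : ∑ k ∈ Finset.range n, d k ≤ ∑ k ∈ Finset.range (l + 1), d k :=
        Finset.sum_le_sum_of_subset_of_nonneg (Finset.range_subset_range.2 h) fun i _ _ => hdnn i
      linarith [hψnn 0]
    · obtain ⟨N, rfl⟩ : ∃ N, n = l + 1 + N := ⟨n - (l + 1), by omega⟩
      rw [Finset.sum_range_add]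
      linarith [hsumtail N]
  have hsummable : Summable d := summable_of_sum_range_le hdnn hsums
  have hsummable' : Summable (fun k => dist (z k) (z (k + 1))) := by rw [← hd]; exact hsummable
  refine ⟨?_, hsummable', cauchySeq_of_dist_le_of_summable d (fun n => (hdk n).le) hsummable⟩
  intro k hk
  obtain ⟨k', rfl⟩ : ∃ k', k = k' + 1 := ⟨k - 1, by omega⟩
  simp only [Nat.add_sub_cancel, hdk, hej]
  by_cases hdk' : d k' = 0
  · rw [hdk', div_zero]
    exact mul_nonneg hCpos.le (hΔnn (k' + 1) (by omega))
  · have hdpos : 0 < d k' := (hdnn k').lt_of_ne (Ne.symm hdk')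
    rw [div_le_iff₀ hdpos]
    exact key k' (k' + 1) (by omega) hk rfl hdk'
end

section
/- If the columns of X ∈ ℝ^{n×s} all belong to a union of p affine subspaces of ℝⁿ each of dimension at most r̃, then the matrix Φ_d(X) ∈ ℝ^{N(n,d)×s}, whose j-th column is the degree-d monomial feature vector φ_d(x_j) of the j-th column of X, has rank at most p·C(r̃+d, d). -/
open Finset Module Submodule

lemma card_le_choose {r d : ℕ} (D : Finset (Fin r →₀ ℕ))
    (hD : ∀ β ∈ D, (β.sum fun _ e => e) ≤ d) :
    D.card ≤ (r + d).choose d := by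
  classical
  have hcard : ∀ β ∈ D, Multiset.card (Finsupp.toMultiset β) ≤ d := by
    intro β hβ
    rw [Finsupp.card_toMultiset]
    exact hD β hβ
  have hrep : ∀ k : ℕ,
      Multiset.filterMap id (Multiset.replicate k (none : Option (Fin r))) = 0 := by
    intro k
    induction k with
    | zero => simp
    | succ k ih => rw [Multiset.replicate_succ, Multiset.filterMap_cons_none _ _ rfl, ih]
  have key : ∀ (m : Multiset (Fin r)) (k : ℕ),
      Multiset.filterMap id (Multiset.map some m + Multiset.replicate k none) = m := by
    intro m k
    induction m using Multiset.induction with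
    | empty => rw [Multiset.map_zero, zero_add, hrep]
    | cons a m ih =>
      rw [Multiset.map_cons, Multiset.cons_add, Multiset.filterMap_cons_some id (some a) _ (b := a) rfl, ih]
  let f : {x // x ∈ D} → Sym (Option (Fin r)) d := fun β =>
    ⟨Multiset.map some (Finsupp.toMultiset β.1) +
      Multiset.replicate (d - Multiset.card (Finsupp.toMultiset β.1)) none,
      by rw [Multiset.card_add, Multiset.card_map, Multiset.card_replicate]
         exact Nat.add_sub_cancel' (hcard β.1 β.2)⟩
  have hinj := Fintype.card_le_of_injective f ?_
  · calc D.card = Fintype.card {x // x ∈ D} := (Fintype.card_coe D).symm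
      _ ≤ Fintype.card (Sym (Option (Fin r)) d) := hinj
      _ = (Fintype.card (Option (Fin r)) + d - 1).choose d := Sym.card_sym_eq_choose d
      _ = (r + d).choose d := by simp
  · intro β γ h
    have h' := congrArg (fun s : Sym (Option (Fin r)) d => Multiset.filterMap id s.1) h
    simp only [f, key] at h'
    have := congrArg Multiset.toFinsupp h'
    rw [Finsupp.toMultiset_toFinsupp, Finsupp.toMultiset_toFinsupp] at this
    exact Subtype.ext this

lemma fs_apply_le_sum {r : ℕ} (β : Fin r →₀ ℕ) (k : Fin r) :
    β k ≤ β.sum fun _ e => e := by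
  rw [Finsupp.sum]
  by_cases h : k ∈ β.support
  · exact Finset.single_le_sum (fun _ _ => Nat.zero_le _) h
  · simp [Finsupp.notMem_support_iff.1 h]

lemma affine_span_bound {n : ℕ} (d rt : ℕ) (S : AffineSubspace ℝ (Fin n → ℝ))
    (hdim : Module.finrank ℝ S.direction ≤ rt) :
    ∃ T : Finset ({α : Fin n →₀ ℕ // (α.sum fun _ e => e) ≤ d} → ℝ),
      T.card ≤ (rt + d).choose d ∧
      ∀ x ∈ S, (fun α : {α : Fin n →₀ ℕ // (α.sum fun _ e => e) ≤ d} =>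
        ∏ i : Fin n, x i ^ (α.1 i)) ∈ span ℝ (T : Set _) := by
  classical
  rcases Set.eq_empty_or_nonempty (S : Set (Fin n → ℝ)) with hS | ⟨x0, hx0⟩
  · refine ⟨∅, by simp, fun x hx => absurd ?_ (Set.notMem_empty x)⟩
    rw [← hS]; exact hx
  set m := finrank ℝ S.direction with hm
  let b : Basis (Fin m) ℝ S.direction := Module.finBasis ℝ S.direction
  let v : Fin m → (Fin n → ℝ) := fun j => (b j : Fin n → ℝ)
  have hspan : span ℝ (Set.range v) = S.direction := by
    have : Set.range v = S.direction.subtype '' Set.range b := by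
      rw [← Set.range_comp]; rfl
    rw [this, ← Submodule.map_span, b.span_eq, Submodule.map_top, Submodule.range_subtype]
  -- polynomial setup
  let L : Fin n → MvPolynomial (Fin m) ℝ := fun i =>
    MvPolynomial.C (x0 i) + ∑ k : Fin m, MvPolynomial.C (v k i) * MvPolynomial.X k
  have hL : ∀ i, (L i).totalDegree ≤ 1 := by
    intro i
    refine (MvPolynomial.totalDegree_add _ _).trans (max_le (by simp) ?_)
    refine (MvPolynomial.totalDegree_finset_sum _ _).trans (Finset.sup_le fun k _ => ?_)
    refine (MvPolynomial.totalDegree_mul _ _).trans ?_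
    simp [MvPolynomial.totalDegree_X]
  let P : {α : Fin n →₀ ℕ // (α.sum fun _ e => e) ≤ d} → MvPolynomial (Fin m) ℝ :=
    fun α => ∏ i : Fin n, (L i) ^ (α.1 i)
  have hPdeg : ∀ α, (P α).totalDegree ≤ d := by
    intro α
    refine (MvPolynomial.totalDegree_finset_prod _ _).trans ?_
    calc ∑ i : Fin n, ((L i) ^ (α.1 i)).totalDegree
        ≤ ∑ i : Fin n, α.1 i * 1 := Finset.sum_le_sum fun i _ =>
          (MvPolynomial.totalDegree_pow _ _).trans (Nat.mul_le_mul_left _ (hL i))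
      _ = α.1.sum fun _ e => e := by
          rw [Finsupp.sum_fintype _ _ (fun _ => rfl)]; simp
      _ ≤ d := α.2
  let topβ : Fin m →₀ ℕ := Finsupp.equivFunOnFinite.symm (fun _ => d)
  let D : Finset (Fin m →₀ ℕ) := (Finset.Iic topβ).filter (fun β => (β.sum fun _ e => e) ≤ d)
  have hsupp : ∀ α, (P α).support ⊆ D := by
    intro α β hβ
    have hdeg : (β.sum fun _ e => e) ≤ d :=
      le_trans (MvPolynomial.le_totalDegree hβ) (hPdeg α)
    refine Finset.mem_filter.2 ⟨Finset.mem_Iic.2 ?_, hdeg⟩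
    intro k
    have : β k ≤ d := le_trans (fs_apply_le_sum β k) hdeg
    simpa [topβ] using this
  let w : (Fin m →₀ ℕ) → ({α : Fin n →₀ ℕ // (α.sum fun _ e => e) ≤ d} → ℝ) :=
    fun β α => MvPolynomial.coeff β (P α)
  refine ⟨D.image w, ?_, ?_⟩
  · refine Finset.card_image_le.trans ?_
    refine (card_le_choose D (fun β hβ => (Finset.mem_filter.1 hβ).2)).trans ?_
    exact Nat.choose_le_choose d (by omega)
  · intro x hx
    have hmem : x - x0 ∈ span ℝ (Set.range v) := by
      rw [hspan]
      simpa using AffineSubspace.vsub_mem_direction hx hx0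
    obtain ⟨c, hc⟩ := (mem_span_range_iff_exists_fun ℝ).1 hmem
    have hxpt : ∀ i : Fin n, x i = x0 i + ∑ k : Fin m, c k * v k i := by
      intro i
      have := congrFun hc i
      simp only [Finset.sum_apply, Pi.smul_apply, smul_eq_mul, Pi.sub_apply] at this
      linarith [this]
    have heval : ∀ α : {α : Fin n →₀ ℕ // (α.sum fun _ e => e) ≤ d},
        (∏ i : Fin n, x i ^ (α.1 i)) = MvPolynomial.eval c (P α) := by
      intro α
      rw [map_prod]
      refine Finset.prod_congr rfl fun i _ => ?_
      rw [map_pow]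
      congr 1
      rw [hxpt i]
      simp only [L, map_add, map_sum, map_mul, MvPolynomial.eval_C, MvPolynomial.eval_X]
      exact congrArg _ (Finset.sum_congr rfl fun k _ => mul_comm _ _)
    have hrep : (fun α : {α : Fin n →₀ ℕ // (α.sum fun _ e => e) ≤ d} =>
        ∏ i : Fin n, x i ^ (α.1 i)) =
        ∑ β ∈ D, (∏ k ∈ β.support, c k ^ β k) • w β := by
      funext α
      rw [heval α, MvPolynomial.eval_eq]
      rw [Finset.sum_apply]
      rw [Finset.sum_subset (hsupp α)]
      · refine Finset.sum_congr rfl fun β _ => ?_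
        simp [w, mul_comm]
      · intro β _ hβ
        rw [MvPolynomial.notMem_support_iff.1 hβ]
        ring
    rw [hrep]
    exact Submodule.sum_mem _ fun β hβ => Submodule.smul_mem _ _
      (Submodule.subset_span (Finset.mem_coe.2 (Finset.mem_image_of_mem w hβ)))


set_option maxHeartbeats 1000000 in
/-- If all columns of `X ∈ ℝ^{n×s}` lie in a union of `p` affine subspaces of
dimension at most `r̃`, then the degree-`d` monomial feature matrix `Φ_d(X)`
(whose `j`-th column lists all monomials of total degree ≤ `d` evaluated at the
`j`-th column of `X`) has rank at most `p · C(r̃ + d, d)`. -/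
theorem stmt_14 {n s : ℕ} (d rt p : ℕ) (X : Matrix (Fin n) (Fin s) ℝ)
    (S : Fin p → AffineSubspace ℝ (Fin n → ℝ))
    (hdim : ∀ i, Module.finrank ℝ (S i).direction ≤ rt)
    (hcols : ∀ j, ∃ i, (fun a => X a j) ∈ S i) :
    letI Φ : Matrix {α : Fin n →₀ ℕ // (α.sum fun _ e => e) ≤ d} (Fin s) ℝ :=
      fun α j => ∏ i : Fin n, X i j ^ (α.1 i)
    Φ.rank ≤ p * Nat.choose (rt + d) d := by
  classical
  set Φ : Matrix {α : Fin n →₀ ℕ // (α.sum fun _ e => e) ≤ d} (Fin s) ℝ :=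
    fun α j => ∏ i : Fin n, X i j ^ (α.1 i) with hΦ
  choose T hTcard hT using fun i => affine_span_bound d rt (S i) (hdim i)
  set U : Finset ({α : Fin n →₀ ℕ // (α.sum fun _ e => e) ≤ d} → ℝ) :=
    Finset.univ.biUnion T with hU
  have hrange : LinearMap.range Φ.mulVecLin ≤ span ℝ (U : Set ({α : Fin n →₀ ℕ // (α.sum fun _ e => e) ≤ d} → ℝ)) := by
    rw [Matrix.range_mulVecLin]
    refine span_le.2 ?_
    rintro _ ⟨j, rfl⟩
    obtain ⟨i, hi⟩ := hcols j
    have h2 := hT i _ hi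
    have h1 : T i ⊆ U := fun a ha => Finset.mem_biUnion.2 ⟨i, Finset.mem_univ _, ha⟩
    exact span_mono (Finset.coe_subset.2 h1) h2
  have hUcard : U.card ≤ p * (rt + d).choose d := by
    refine Finset.card_biUnion_le.trans ?_
    calc ∑ i : Fin p, (T i).card ≤ ∑ _i : Fin p, (rt + d).choose d :=
          Finset.sum_le_sum fun i _ => hTcard i
      _ = p * (rt + d).choose d := by simp [mul_comm]
  haveI : FiniteDimensional ℝ (span ℝ (U : Set ({α : Fin n →₀ ℕ // (α.sum fun _ e => e) ≤ d} → ℝ))) :=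
    FiniteDimensional.span_of_finite ℝ U.finite_toSet
  have e1 : Φ.rank = Module.finrank ℝ (LinearMap.range Φ.mulVecLin) := Matrix.rank.eq_1 Φ
  have e2 : Module.finrank ℝ (LinearMap.range Φ.mulVecLin) ≤ Module.finrank ℝ (span ℝ (U : Set _)) :=
    Submodule.finrank_mono hrange
  have e3 := finrank_span_finset_le_card (R := ℝ) U
  rw [Set.finrank] at e3
  exact e1 ▸ le_trans e2 (le_trans e3 hUcard)
end

section
/- Let f : ℝ^k → ℝ be bounded below by f* and satisfy the quadratic upper bound |f(x+η) − f(x) − ⟨∇f(x),η⟩| ≤ (L/2)‖η‖² for all x, η. Consider iterations x_{j+1} = x_j − α_j ∇f(x_j) where each α_j is produced by Armijo backtracking with parameters β, τ ∈ (0,1) and initial step α₀ > 0, and the iteration stops the first time ‖∇f(x_j)‖ ≤ ε for a given ε > 0. Then the number of iterations N before stopping satisfies N ≤ (f(x_0) − f*)/(β·min{α₀, 2τ(1−β)/L}·ε²). -/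
/-- Complexity of gradient descent with Armijo backtracking: if `f` is bounded
below by `f*`, satisfies the quadratic upper bound with constant `L > 0`, each
iterate is updated by `x_{j+1} = x_j − α_j ∇f(x_j)` where `α_j` is the first
element of the backtracking sequence `α₀, τα₀, τ²α₀, …` satisfying the Armijo
condition, and `‖∇f(x_j)‖ > ε` for all `j < N` (the method has not yet stopped),
then `N ≤ (f(x₀) − f*)/(β · min{α₀, 2τ(1−β)/L} · ε²)`. -/
theorem stmt_18 {k : ℕ} (f : EuclideanSpace ℝ (Fin k) → ℝ)
    (g : EuclideanSpace ℝ (Fin k) → EuclideanSpace ℝ (Fin k))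
    (hdiff : ∀ y, HasGradientAt f (g y) y)
    (fstar : ℝ) (hbound : ∀ y, fstar ≤ f y)
    (L : ℝ) (hL : 0 < L)
    (hquad : ∀ x η : EuclideanSpace ℝ (Fin k),
      |f (x + η) - f x - inner ℝ (g x) η| ≤ L / 2 * ‖η‖ ^ 2)
    (β τ α₀ ε : ℝ) (hβ : β ∈ Set.Ioo (0:ℝ) 1) (hτ : τ ∈ Set.Ioo (0:ℝ) 1)
    (hα₀ : 0 < α₀) (hε : 0 < ε)
    (N : ℕ) (x : ℕ → EuclideanSpace ℝ (Fin k)) (α : ℕ → ℝ)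
    (hrun : ∀ j < N, ε < ‖g (x j)‖)
    (hupd : ∀ j < N, x (j + 1) = x j - α j • g (x j))
    (hback : ∀ j < N, ∃ i : ℕ, α j = α₀ * τ ^ i ∧
      f (x j - (α₀ * τ ^ i) • g (x j)) ≤ f (x j) - β * (α₀ * τ ^ i) * ‖g (x j)‖ ^ 2 ∧
      ∀ i' < i, ¬(f (x j - (α₀ * τ ^ i') • g (x j)) ≤
        f (x j) - β * (α₀ * τ ^ i') * ‖g (x j)‖ ^ 2)) :
    (N : ℝ) ≤ (f (x 0) - fstar) / (β * min α₀ (2 * τ * (1 - β) / L) * ε ^ 2) := by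
  obtain ⟨hβ0, hβ1⟩ := hβ
  obtain ⟨hτ0, hτ1⟩ := hτ
  set m : ℝ := min α₀ (2 * τ * (1 - β) / L) with hm_def
  have hm : 0 < m :=
    lt_min hα₀ (div_pos (mul_pos (mul_pos two_pos hτ0) (sub_pos.mpr hβ1)) hL)
  have hD : 0 < β * m * ε ^ 2 := by positivity
  -- sufficiency of the Armijo condition for small steps
  have harmijo : ∀ (y : EuclideanSpace ℝ (Fin k)) (a : ℝ), 0 < a → a ≤ 2 * (1 - β) / L →
      f (y - a • g y) ≤ f y - β * a * ‖g y‖ ^ 2 := by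
    intro y a ha hale
    have hq := hquad y (-(a • g y))
    have hy : y + -(a • g y) = y - a • g y := by abel
    have hinner : (inner ℝ (g y) (-(a • g y)) : ℝ) = -(a * ‖g y‖ ^ 2) := by
      rw [inner_neg_right, real_inner_smul_right, real_inner_self_eq_norm_sq]
    have hnorm : ‖-(a • g y)‖ ^ 2 = a ^ 2 * ‖g y‖ ^ 2 := by
      rw [norm_neg, norm_smul, mul_pow, Real.norm_eq_abs, sq_abs]
    rw [hy, hinner, hnorm] at hq
    have h2 := (abs_le.mp hq).2
    have hLa : a * L ≤ 2 * (1 - β) := (le_div_iff₀ hL).mp hale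
    nlinarith [mul_nonneg (mul_nonneg (by nlinarith : (0:ℝ) ≤ 2 * (1 - β) - L * a) ha.le)
      (sq_nonneg ‖g y‖)]
  -- each iteration decreases f by at least β m ε²
  have hstep : ∀ j < N, f (x (j + 1)) ≤ f (x j) - β * m * ε ^ 2 := by
    intro j hj
    obtain ⟨i, hαj, hArm, hfail⟩ := hback j hj
    have hgj := hrun j hj
    have hαm : m ≤ α j := by
      rcases Nat.eq_zero_or_pos i with h0 | hpos
      · subst h0; simp at hαj; rw [hαj]; exact min_le_left _ _
      · obtain ⟨n, rfl⟩ : ∃ n, i = n + 1 := ⟨i - 1, by omega⟩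
        have hf := hfail n (by omega)
        have ha' : 0 < α₀ * τ ^ n := mul_pos hα₀ (pow_pos hτ0 _)
        have hbig : 2 * (1 - β) / L < α₀ * τ ^ n := by
          by_contra hle
          exact hf (harmijo (x j) _ ha' (le_of_not_gt hle))
        have heq : α j = τ * (α₀ * τ ^ n) := by rw [hαj, pow_succ]; ring
        rw [heq]
        calc m ≤ 2 * τ * (1 - β) / L := min_le_right _ _
          _ = τ * (2 * (1 - β) / L) := by ring
          _ ≤ τ * (α₀ * τ ^ n) :=
              mul_le_mul_of_nonneg_left (le_of_lt hbig) (le_of_lt hτ0)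
    have hdec : f (x (j + 1)) ≤ f (x j) - β * α j * ‖g (x j)‖ ^ 2 := by
      rw [hupd j hj, hαj]; exact hArm
    have hεg : ε ^ 2 ≤ ‖g (x j)‖ ^ 2 := by nlinarith
    have hme : m * ε ^ 2 ≤ α j * ‖g (x j)‖ ^ 2 :=
      mul_le_mul hαm hεg (sq_nonneg ε) (le_trans hm.le hαm)
    have : β * (m * ε ^ 2) ≤ β * (α j * ‖g (x j)‖ ^ 2) :=
      mul_le_mul_of_nonneg_left hme hβ0.le
    rw [← mul_assoc, ← mul_assoc] at this
    linarith
  -- telescoping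
  have hsum : ∀ n, n ≤ N → f (x n) ≤ f (x 0) - n * (β * m * ε ^ 2) := by
    intro n
    induction n with
    | zero => intro _; simp
    | succ n ih =>
      intro hn
      have h1 := hstep n (by omega)
      have h2 := ih (by omega)
      push_cast
      linarith
  have hN := hsum N le_rfl
  have hfN := hbound (x N)
  rw [le_div_iff₀ hD]
  linarith
end
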